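/- Let Σ be a fan in ℝ^n with convex support of dimension n, let P = {ρ_1,…,ρ_k} be a primitive collection for Σ, and let ρ_1 + ⋯ + ρ_k = Σ_{ρ∈S} b_ρ ρ be a primitive relation for P (so S is a linearly independent subset of σ(1) for the minimal cone σ of Σ containing ρ_1 + ⋯ + ρ_k, and b_ρ > 0 for all ρ ∈ S). Then b_ρ < 1 for every ρ ∈ P ∩ S. Consequently, the set of rays ρ at which the vector a_P ∈ ℝ^{Σ(1)} (defined by (a_P)_ρ = 1 for ρ ∈ P∖S, (a_P)_ρ = 1 − b_ρ for ρ ∈ P∩S, (a_P)_ρ = −b_ρ for ρ ∈ S∖P, and 0 otherwise) has a strictly positive entry is exactly P. -/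

import Mathlib

open Set

noncomputable section

/-- Ambient vector space `ℝ^n`. -/
abbrev V (n : ℕ) := Fin n → ℝ

/-- The cone generated by a set of vectors: all finite nonnegative combinations. -/
def coneGen {n : ℕ} (G : Set (V n)) : Set (V n) :=
  { x | ∃ (t : Finset (V n)) (c : V n → ℝ),
      ↑t ⊆ G ∧ (∀ g ∈ t, 0 ≤ c g) ∧ x = ∑ g ∈ t, c g • g }

/-- A vector with integer coordinates. -/
def IsIntegralVec {n : ℕ} (v : V n) : Prop := ∀ i, ∃ z : ℤ, v i = (z : ℝ)

/-- A rational polyhedral cone: generated by finitely many integral vectors. -/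
def IsRatPolyhedralCone {n : ℕ} (σ : Set (V n)) : Prop :=
  ∃ G : Finset (V n), (∀ g ∈ G, IsIntegralVec g) ∧ σ = coneGen ↑G

/-- A strongly convex cone contains no line. -/
def StronglyConvex {n : ℕ} (σ : Set (V n)) : Prop :=
  ∀ x ∈ σ, -x ∈ σ → x = 0

/-- `τ` is a face of the cone `σ`: cut out by a supporting linear functional. -/
def IsFaceOf {n : ℕ} (τ σ : Set (V n)) : Prop :=
  ∃ m : Module.Dual ℝ (V n), (∀ x ∈ σ, 0 ≤ m x) ∧ τ = σ ∩ {x | m x = 0}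

/-- A fan in `ℝ^n`: a finite collection of strongly convex rational polyhedral
cones, closed under taking faces, such that the intersection of any two cones
is a face of each. -/
structure Fan (n : ℕ) where
  cones : Set (Set (V n))
  finite : cones.Finite
  poly : ∀ σ ∈ cones, IsRatPolyhedralCone σ ∧ StronglyConvex σ
  face_mem : ∀ σ ∈ cones, ∀ τ : Set (V n), IsFaceOf τ σ → τ ∈ cones
  inter_face : ∀ σ ∈ cones, ∀ σ' ∈ cones,
    IsFaceOf (σ ∩ σ') σ ∧ IsFaceOf (σ ∩ σ') σ'

/-- The support of a fan: the union of its cones. -/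
def Fan.support {n : ℕ} (F : Fan n) : Set (V n) := ⋃ σ ∈ F.cones, σ

/-- The dimension of a cone: the dimension of its linear span. -/
def dimCone {n : ℕ} (σ : Set (V n)) : ℕ :=
  Module.finrank ℝ (Submodule.span ℝ σ)

/-- `Σ(k)`: the set of `k`-dimensional cones of the fan. -/
def Fan.conesDim {n : ℕ} (F : Fan n) (k : ℕ) : Set (Set (V n)) :=
  {σ | σ ∈ F.cones ∧ dimCone σ = k}

/-- The ray generated by a vector. -/
def ray {n : ℕ} (v : V n) : Set (V n) := {x | ∃ t : ℝ, 0 ≤ t ∧ x = t • v}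

/-- A primitive lattice vector: integral, nonzero, and not a nontrivial
positive integer multiple of an integral vector. -/
def IsPrimitiveVec {n : ℕ} (v : V n) : Prop :=
  IsIntegralVec v ∧ v ≠ 0 ∧
    ∀ (w : V n) (k : ℕ), IsIntegralVec w → v = (k : ℝ) • w → k = 1

/-- `Σ(1)`, identified with the set of primitive generators of the rays of the fan. -/
def Fan.rayGens {n : ℕ} (F : Fan n) : Set (V n) :=
  { v | IsPrimitiveVec v ∧ ray v ∈ F.cones }

/-- `σ(1)`: the primitive generators of the 1-dimensional faces of the cone `σ`. -/
def coneRays {n : ℕ} (σ : Set (V n)) : Set (V n) :=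
  { v | IsPrimitiveVec v ∧ IsFaceOf (ray v) σ }

/-- `φ ∈ PL(Σ)`: `φ` is linear on each cone of the fan. -/
def IsPL {n : ℕ} (F : Fan n) (φ : V n → ℝ) : Prop :=
  ∀ σ ∈ F.cones, ∃ m : Module.Dual ℝ (V n), ∀ x ∈ σ, φ x = m x

/-- Convexity of a piecewise-linear function on the support of the fan. -/
def IsConvexPLF {n : ℕ} (F : Fan n) (φ : V n → ℝ) : Prop :=
  ∀ u ∈ F.support, ∀ v ∈ F.support, φ (u + v) ≤ φ u + φ v

/-- Strict convexity: strict inequality whenever `u, v` lie in no common cone. -/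
def IsStrictlyConvexPLF {n : ℕ} (F : Fan n) (φ : V n → ℝ) : Prop :=
  ∀ u ∈ F.support, ∀ v ∈ F.support,
    (¬ ∃ σ ∈ F.cones, u ∈ σ ∧ v ∈ σ) → φ (u + v) < φ u + φ v

/-- A fan is quasi-projective if it carries a strictly convex piecewise-linear function. -/
def Fan.QuasiProjective {n : ℕ} (F : Fan n) : Prop :=
  ∃ φ : V n → ℝ, IsPL F φ ∧ IsStrictlyConvexPLF F φ

/-- A fan is simplicial if each of its cones is generated by linearly independent vectors. -/
def Fan.Simplicial {n : ℕ} (F : Fan n) : Prop :=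
  ∀ σ ∈ F.cones, ∃ G : Finset (V n),
    LinearIndependent ℝ (fun g : {x // x ∈ G} => (g : V n)) ∧ σ = coneGen ↑G

/-- `F'` refines `F`: same support, and every cone of `F'` lies in a cone of `F`. -/
def Fan.Refines {n : ℕ} (F' F : Fan n) : Prop :=
  F'.support = F.support ∧ ∀ σ' ∈ F'.cones, ∃ σ ∈ F.cones, σ' ⊆ σ

/-- A primitive collection: a set of rays of the fan contained in no single cone
of the fan, every proper subset of which is contained in some cone. -/
def IsPrimColl {n : ℕ} (F : Fan n) (P : Finset (V n)) : Prop :=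
  ↑P ⊆ F.rayGens ∧ (∀ σ ∈ F.cones, ¬ (↑P ⊆ σ)) ∧
    ∀ Q : Finset (V n), Q ⊂ P → ∃ σ ∈ F.cones, ↑Q ⊆ σ

/-- The subspace `PL(Σ)` of piecewise-linear functions, as a submodule of functions. -/
def PLsub {n : ℕ} (F : Fan n) : Submodule ℝ (V n → ℝ) where
  carrier := {φ | IsPL F φ}
  add_mem' := by
    intro φ ψ hφ hψ σ hσ
    obtain ⟨m1, h1⟩ := hφ σ hσ
    obtain ⟨m2, h2⟩ := hψ σ hσ
    exact ⟨m1 + m2, fun x hx => by simp [Pi.add_apply, h1 x hx, h2 x hx]⟩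
  zero_mem' := by
    intro σ hσ
    exact ⟨0, fun x hx => rfl⟩
  smul_mem' := by
    intro c φ hφ σ hσ
    obtain ⟨m, h⟩ := hφ σ hσ
    exact ⟨c • m, fun x hx => by simp [Pi.smul_apply, h x hx]⟩

/-- Evaluation at a point, as an element of `PL(Σ)*`. -/
def evalPL {n : ℕ} (F : Fan n) (x : V n) : Module.Dual ℝ (PLsub F) where
  toFun φ := (φ : V n → ℝ) x
  map_add' φ ψ := rfl
  map_smul' c φ := rfl

/-- The cone `CPL(Σ)` of convex piecewise-linear functions, inside `PL(Σ)`. -/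
def CPLs {n : ℕ} (F : Fan n) : Set (PLsub F) :=
  {φ | IsConvexPLF F (φ : V n → ℝ)}

/-- The Mori cone `NE(Σ) ⊆ PL(Σ)*`: the dual cone of `CPL(Σ)`. -/
def NE {n : ℕ} (F : Fan n) : Set (Module.Dual ℝ (PLsub F)) :=
  {ℓ | ∀ φ ∈ CPLs F, 0 ≤ ℓ φ}

/-- An interior wall: an `(n-1)`-dimensional cone of the fan not contained in the
topological boundary of the support. -/
def Fan.IsInteriorWall {n : ℕ} (F : Fan n) (τ : Set (V n)) : Prop :=
  τ ∈ F.cones ∧ dimCone τ = n - 1 ∧ ¬ (τ ⊆ frontier F.support)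

/-- The data of a wall relation for an interior wall `τ = σ ∩ σ'`:
`n-1` linearly independent rays of `τ`, rays `ρn ∈ σ(1) ∖ τ(1)` and
`ρn' ∈ σ'(1) ∖ τ(1)`, and coefficients with `aₙ > 0` and
`a₁ρ₁ + ⋯ + aₙρₙ + ρₙ₊₁ = 0`. -/
structure WallRelData (n : ℕ) (τ σ σ' : Set (V n)) where
  ρ : Fin (n - 1) → V n
  ρn : V n
  ρn' : V n
  a : Fin (n - 1) → ℝ
  an : ℝ
  ρ_mem : ∀ i, ρ i ∈ coneRays τ
  ρ_indep : LinearIndependent ℝ ρ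
  ρn_mem : ρn ∈ coneRays σ \ coneRays τ
  ρn'_mem : ρn' ∈ coneRays σ' \ coneRays τ
  an_pos : 0 < an
  rel : (∑ i, a i • ρ i) + an • ρn + ρn' = 0

/-- The functional `l_τ` on functions associated to a wall relation. -/
def WallRelData.funct {n : ℕ} {τ σ σ' : Set (V n)} (w : WallRelData n τ σ σ')
    (φ : V n → ℝ) : ℝ :=
  (∑ i, w.a i * φ (w.ρ i)) + w.an * φ w.ρn + φ w.ρn'

/-- The functional `l_τ ∈ PL(Σ)*` associated to a wall relation. -/
def WallRelData.dual {n : ℕ} (F : Fan n) {τ σ σ' : Set (V n)}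
    (w : WallRelData n τ σ σ') : Module.Dual ℝ (PLsub F) :=
  (∑ i, w.a i • evalPL F (w.ρ i)) + w.an • evalPL F w.ρn + evalPL F w.ρn'

/-- `ℓ ∈ PL(Σ)*` is (a choice of) the wall-relation functional of some interior wall. -/
def IsWallFunctional {n : ℕ} (F : Fan n) (ℓ : Module.Dual ℝ (PLsub F)) : Prop :=
  ∃ (τ σ σ' : Set (V n)) (w : WallRelData n τ σ σ'),
    F.IsInteriorWall τ ∧ σ ∈ F.conesDim n ∧ σ' ∈ F.conesDim n ∧
      τ = σ ∩ σ' ∧ ℓ = w.dual F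

/-- `σ` is the minimal cone of the fan containing `x`. -/
def IsMinimalConeContaining {n : ℕ} (F : Fan n) (x : V n) (σ : Set (V n)) : Prop :=
  σ ∈ F.cones ∧ x ∈ σ ∧ ∀ σ' ∈ F.cones, x ∈ σ' → σ ⊆ σ'

/-- A primitive relation for the primitive collection `P`: a linearly independent
subset `S ⊆ σ(1)` of the minimal cone `σ` containing `∑_{ρ∈P} ρ` together with
positive coefficients `b` with `∑_{ρ∈P} ρ = ∑_{ρ∈S} b_ρ ρ`. -/
def IsPrimRel {n : ℕ} (F : Fan n) (P S : Finset (V n)) (b : V n → ℝ) : Prop :=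
  ∃ σ : Set (V n), IsMinimalConeContaining F (∑ ρ ∈ P, ρ) σ ∧
    ↑S ⊆ coneRays σ ∧
    LinearIndependent ℝ (fun s : {x // x ∈ S} => (s : V n)) ∧
    (∀ ρ ∈ S, 0 < b ρ) ∧ (∑ ρ ∈ P, ρ) = ∑ ρ ∈ S, b ρ • ρ

open scoped Classical in
/-- The vector `a_P ∈ ℝ^{Σ(1)}` associated to a primitive relation. -/
def primVec {n : ℕ} (P S : Finset (V n)) (b : V n → ℝ) : V n → ℝ := fun ρ =>
  if ρ ∈ P then (if ρ ∈ S then 1 - b ρ else 1)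
  else (if ρ ∈ S then -b ρ else 0)

/-- The functional `l_P ∈ PL(Σ)*` of a primitive collection:
`φ ↦ ∑_{ρ∈P} φ(ρ) − φ(∑_{ρ∈P} ρ)`. -/
def primDual {n : ℕ} (F : Fan n) (P : Finset (V n)) : Module.Dual ℝ (PLsub F) :=
  (∑ ρ ∈ P, evalPL F ρ) - evalPL F (∑ ρ ∈ P, ρ)


lemma zero_mem_coneGen {n : ℕ} (G : Set (V n)) : (0 : V n) ∈ coneGen G :=
  ⟨∅, 0, by simp, by simp, by simp⟩

lemma add_mem_coneGen {n : ℕ} {G : Set (V n)} {x y : V n}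
    (hx : x ∈ coneGen G) (hy : y ∈ coneGen G) : x + y ∈ coneGen G := by
  classical
  obtain ⟨t1, c1, ht1, hc1, rfl⟩ := hx
  obtain ⟨t2, c2, ht2, hc2, rfl⟩ := hy
  refine ⟨t1 ∪ t2,
    (fun g => (if g ∈ t1 then c1 g else 0) + (if g ∈ t2 then c2 g else 0)), ?_, ?_, ?_⟩
  · intro g hg
    rcases Finset.mem_union.1 hg with h | h
    · exact ht1 h
    · exact ht2 h
  · intro g hg
    apply add_nonneg <;> split_ifs with h
    · exact hc1 g h
    · exact le_refl 0
    · exact hc2 g h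
    · exact le_refl 0
  · simp only [add_smul, ite_smul, zero_smul, Finset.sum_add_distrib,
      Finset.sum_ite_mem, Finset.union_inter_cancel_left, Finset.union_inter_cancel_right]

lemma smul_mem_coneGen {n : ℕ} {G : Set (V n)} {x : V n} {c : ℝ}
    (hc : 0 ≤ c) (hx : x ∈ coneGen G) : c • x ∈ coneGen G := by
  obtain ⟨t, c1, ht, hc1, rfl⟩ := hx
  exact ⟨t, fun g => c * c1 g, ht, fun g hg => mul_nonneg hc (hc1 g hg), by
    rw [Finset.smul_sum]; simp [smul_smul]⟩

lemma sum_mem_coneGen {n : ℕ} {G : Set (V n)} {ι : Type*} (s : Finset ι) (f : ι → V n)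
    (h : ∀ i ∈ s, f i ∈ coneGen G) : ∑ i ∈ s, f i ∈ coneGen G := by
  classical
  induction s using Finset.induction_on with
  | empty => simpa using zero_mem_coneGen G
  | insert _ _ hnot ih =>
      rw [Finset.sum_insert hnot]
      exact add_mem_coneGen (h _ (Finset.mem_insert_self _ _))
        (ih fun i hi => h i (Finset.mem_insert_of_mem hi))

/-- In a primitive relation `ρ₁ + ⋯ + ρ_k = ∑_{ρ∈S} b_ρ ρ` for a primitive
collection `P`, the coefficients satisfy `b_ρ < 1` for `ρ ∈ P ∩ S`; consequently
the set of rays where the associated vector `a_P ∈ ℝ^{Σ(1)}` is strictly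
positive is exactly `P`. -/
theorem primRel_coeff_lt_one {n : ℕ} (F : Fan n)
    (hconv : Convex ℝ F.support) (hdim : dimCone F.support = n)
    (P S : Finset (V n)) (b : V n → ℝ)
    (hP : IsPrimColl F P) (hrel : IsPrimRel F P S b) :
    (∀ ρ ∈ P ∩ S, b ρ < 1) ∧
    {ρ : V n | 0 < primVec P S b ρ} = ↑P := by
  classical
  obtain ⟨σ, ⟨hσF, hxσ, hmin⟩, hSσ, hSind, hbpos, hsum⟩ := hrel
  have hσmem : ∀ s ∈ S, s ∈ σ := by
    intro s hs
    obtain ⟨_, m, hm, heq⟩ := hSσ hs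
    have hsr : s ∈ ray s := ⟨1, zero_le_one, (one_smul _ _).symm⟩
    rw [heq] at hsr
    exact hsr.1
  have key : ∀ ρ₀ ∈ P ∩ S, b ρ₀ < 1 := by
    intro ρ₀ hρ₀
    rw [Finset.mem_inter] at hρ₀
    by_contra hge
    push_neg at hge
    obtain ⟨τ, hτF, hPτ⟩ := hP.2.2 (P.erase ρ₀) (Finset.erase_ssubset hρ₀.1)
    obtain ⟨⟨Gσ, _, hσeq⟩, _⟩ := F.poly σ hσF
    obtain ⟨⟨Gτ, _, hτeq⟩, _⟩ := F.poly τ hτF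
    set x' : V n := ∑ ρ ∈ P.erase ρ₀, ρ with hx'def
    have hx'τ : x' ∈ τ := by
      rw [hτeq]
      exact sum_mem_coneGen _ _ fun ρ hρ => hτeq ▸ hPτ hρ
    have h1 : ρ₀ + x' = ∑ ρ ∈ P, ρ := Finset.add_sum_erase _ (fun ρ => ρ) hρ₀.1
    have h2 : b ρ₀ • ρ₀ + ∑ s ∈ S.erase ρ₀, b s • s = ∑ s ∈ S, b s • s :=
      Finset.add_sum_erase S (fun s => b s • s) hρ₀.2
    have hx'eq : x' = (b ρ₀ - 1) • ρ₀ + ∑ s ∈ S.erase ρ₀, b s • s := by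
      have h3 : ρ₀ + x' = b ρ₀ • ρ₀ + ∑ s ∈ S.erase ρ₀, b s • s := by
        rw [h1, hsum, h2]
      have h4 : x' = b ρ₀ • ρ₀ + (∑ s ∈ S.erase ρ₀, b s • s) - ρ₀ := by
        rw [← h3]; abel
      rw [sub_smul, one_smul, h4]
      abel
    have hx'σ : x' ∈ σ := by
      rw [hx'eq, hσeq]
      refine add_mem_coneGen (smul_mem_coneGen (by linarith) ?_) ?_
      · exact hσeq ▸ hσmem ρ₀ hρ₀.2
      · exact sum_mem_coneGen _ _ fun s hs =>
          smul_mem_coneGen (le_of_lt (hbpos s (Finset.mem_of_mem_erase hs)))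
            (hσeq ▸ hσmem s (Finset.mem_of_mem_erase hs))
    obtain ⟨m, hmpos, hface⟩ := (F.inter_face τ hτF σ hσF).1
    have hx'm : m x' = 0 := by
      have hmem : x' ∈ τ ∩ σ := ⟨hx'τ, hx'σ⟩
      rw [hface] at hmem
      exact hmem.2
    have hall : ∀ ρ ∈ P.erase ρ₀, m ρ = 0 := by
      have hsum' : ∑ ρ ∈ P.erase ρ₀, m ρ = 0 := by
        rw [← map_sum]; exact hx'm
      exact fun ρ hρ => (Finset.sum_eq_zero_iff_of_nonneg
        (fun ρ hρ => hmpos ρ (hPτ hρ))).1 hsum' ρ hρ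
    have hPσ : ↑P ⊆ σ := by
      intro ρ hρ
      rw [Finset.mem_coe] at hρ
      by_cases h : ρ = ρ₀
      · exact h ▸ hσmem ρ₀ hρ₀.2
      · have hρe : ρ ∈ P.erase ρ₀ := Finset.mem_erase.2 ⟨h, hρ⟩
        have : ρ ∈ τ ∩ {x | m x = 0} := ⟨hPτ hρe, hall ρ hρe⟩
        rw [← hface] at this
        exact this.2
    exact hP.2.1 σ hσF hPσ
  refine ⟨key, ?_⟩
  ext ρ
  simp only [Set.mem_setOf_eq, Finset.mem_coe]
  unfold primVec
  by_cases hp : ρ ∈ P <;> by_cases hs : ρ ∈ S <;> simp only [hp, hs, if_true, if_false,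
    if_pos, if_neg, not_false_iff]
  · simp only [hp, if_pos, iff_true]
    linarith [key ρ (Finset.mem_inter.2 ⟨hp, hs⟩)]
  · simp [hp]
  · simp only [hp, iff_false]
    intro h
    linarith [hbpos ρ hs]
  · simp [hp]
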